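/- For every primitive vector v in ℤ² with |v| > 1 (Euclidean norm), there exists a unique pair of vectors v₋, v₊ in ℤ² satisfying v₋ × v = 1, v × v₊ = 1, v₋ × v₊ = 1, |v₋| < |v|, and |v₊| < |v|, where (a,b) × (c,d) := ad − bc. Moreover this pair satisfies v = v₋ + v₊. -/

import Mathlib

/-- Cross product on ℤ²: (a,b) × (c,d) = ad − bc. -/
def cross (v w : ℤ × ℤ) : ℤ := v.1 * w.2 - v.2 * w.1

/-- Euclidean norm of a vector in ℤ². -/
noncomputable def enorm (v : ℤ × ℤ) : ℝ := Real.sqrt ((v.1 : ℝ) ^ 2 + (v.2 : ℝ) ^ 2)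

/-- A vector of ℤ² is primitive if its coordinates are coprime. -/
def IsPrimitive (v : ℤ × ℤ) : Prop := Int.gcd v.1 v.2 = 1

lemma enorm_lt_iff (x y : ℤ × ℤ) : _root_.enorm x < _root_.enorm y ↔ x.1^2 + x.2^2 < y.1^2 + y.2^2 := by
  unfold _root_.enorm
  rw [Real.sqrt_lt_sqrt_iff (by positivity)]
  constructor
  · intro h; exact_mod_cast h
  · intro h; exact_mod_cast h

lemma pick_sum (v p1 p2 : ℤ × ℤ) (h1 : cross p1 v = 1) (h2 : cross v p2 = 1)
    (h3 : cross p1 p2 = 1) : v = p1 + p2 := by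
  unfold cross at h1 h2 h3
  have e1 : v.1 = p1.1 + p2.1 := by linear_combination p2.1 * h1 + p1.1 * h2 - v.1 * h3
  have e2 : v.2 = p1.2 + p2.2 := by linear_combination p2.2 * h1 + p1.2 * h2 - v.2 * h3
  exact Prod.ext e1 e2

lemma norm_aux (m n A B c : ℤ) (hcr : (A*n - B*m)^2 = 1) (hdot : A*m + B*n = c)
    (hc1 : 1 ≤ c) (hc2 : c ≤ m^2 + n^2 - 1) : A^2 + B^2 < m^2 + n^2 := by
  have hid : 1 + c^2 = (A^2 + B^2) * (m^2 + n^2) := by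
    linear_combination (-1) * hcr - (A*m + B*n + c) * hdot
  have hq2 : (2:ℤ) ≤ m^2 + n^2 := by linarith
  nlinarith [hid, mul_nonneg (by linarith : (0:ℤ) ≤ c - 1) (by linarith : (0:ℤ) ≤ m^2+n^2-1-c),
    mul_le_mul_of_nonneg_right hc2 (by linarith : (0:ℤ) ≤ m^2+n^2), hq2, hc1,
    (by linarith : (0:ℤ) < m^2+n^2)]

lemma dot_aux (m n A B c : ℤ) (hcr : (A*n - B*m)^2 = 1) (hdot : A*m + B*n = c)
    (hN : A^2 + B^2 < m^2 + n^2) : c ≤ m^2 + n^2 - 1 := by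
  have hid : 1 + c^2 = (A^2 + B^2) * (m^2 + n^2) := by
    linear_combination (-1) * hcr - (A*m + B*n + c) * hdot
  have hq0 : (0:ℤ) < m^2 + n^2 := by nlinarith [sq_nonneg A, sq_nonneg B]
  have h : c^2 ≤ (m^2+n^2)^2 - (m^2+n^2) - 1 := by
    nlinarith [hid, mul_le_mul_of_nonneg_right
      (by linarith [Int.lt_iff_add_one_le.mp hN] : A^2+B^2 ≤ m^2+n^2 - 1) (le_of_lt hq0)]
  have hlt : c < m^2+n^2 := by
    nlinarith [h, hq0, sq_nonneg (c - (m^2+n^2))]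
  linarith [Int.lt_iff_add_one_le.mp hlt]

lemma uniq_aux (m n a b A B u w : ℤ) (hab : a*n - b*m = 1)
    (hcrA : A*n - B*m = 1) (hcru : u*n - w*m = 1)
    (hA1 : 1 ≤ A*m + B*n) (hA2 : A*m + B*n ≤ m^2 + n^2 - 1)
    (hu1 : 1 ≤ u*m + w*n) (hu2 : u*m + w*n ≤ m^2 + n^2 - 1) :
    u = A ∧ w = B := by
  have hcz : (u - A)*n - (w - B)*m = 0 := by linear_combination hcru - hcrA
  have hdm : u - A = (a*(w - B) - b*(u - A)) * m := by
    linear_combination (A - u) * hab + a * hcz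
  have hdn : w - B = (a*(w - B) - b*(u - A)) * n := by
    linear_combination (B - w) * hab + b * hcz
  have hdiff : (u*m + w*n) - (A*m + B*n) = (a*(w - B) - b*(u - A)) * (m^2 + n^2) := by
    linear_combination m * hdm + n * hdn
  have hq1 : (0:ℤ) < m^2 + n^2 := by linarith
  have hlow : (-1) * (m^2+n^2) < (a*(w - B) - b*(u - A)) * (m^2 + n^2) := by
    rw [← hdiff]; linarith
  have hhigh : (a*(w - B) - b*(u - A)) * (m^2 + n^2) < 1 * (m^2 + n^2) := by
    rw [← hdiff]; linarith
  have h1 : (-1:ℤ) < a*(w - B) - b*(u - A) := lt_of_mul_lt_mul_right hlow (le_of_lt hq1)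
  have h2 : a*(w - B) - b*(u - A) < 1 := lt_of_mul_lt_mul_right hhigh (le_of_lt hq1)
  have h0 : a*(w - B) - b*(u - A) = 0 :=
    le_antisymm (by linarith [Int.lt_iff_add_one_le.mp h2])
      (by linarith [Int.lt_iff_add_one_le.mp h1])
  rw [h0] at hdm hdn
  constructor <;> linarith [hdm, hdn]


/-- Pick's theorem (Proposition-Definition): for every primitive `v` with `|v| > 1` there is a
unique pair `(v₋, v₊)` with `v₋ × v = v × v₊ = v₋ × v₊ = 1` and `|v₋|, |v₊| < |v|`; moreover
this pair satisfies `v = v₋ + v₊`. -/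
theorem pick_decomposition (v : ℤ × ℤ) (hprim : IsPrimitive v) (hnorm : 1 < _root_.enorm v) :
    (∃! p : (ℤ × ℤ) × (ℤ × ℤ),
      cross p.1 v = 1 ∧ cross v p.2 = 1 ∧ cross p.1 p.2 = 1 ∧
        _root_.enorm p.1 < _root_.enorm v ∧ _root_.enorm p.2 < _root_.enorm v) ∧
    (∀ p : (ℤ × ℤ) × (ℤ × ℤ),
      cross p.1 v = 1 → cross v p.2 = 1 → cross p.1 p.2 = 1 →
        _root_.enorm p.1 < _root_.enorm v → _root_.enorm p.2 < _root_.enorm v → v = p.1 + p.2) := by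
  obtain ⟨m, n⟩ := v
  have hcop : IsCoprime m n := Int.isCoprime_iff_gcd_eq_one.mpr hprim
  obtain ⟨x, y, hxy⟩ := hcop
  have hab : y * n - (-x) * m = 1 := by linear_combination hxy
  set a : ℤ := y
  set b : ℤ := -x
  clear_value a b
  clear hxy
  -- 2 ≤ m^2+n^2
  have hR : (1:ℝ) < (m:ℝ)^2 + (n:ℝ)^2 := by
    have h := hnorm
    unfold _root_.enorm at h
    simpa using (Real.lt_sqrt (by norm_num)).mp h
  have hZ : (1:ℤ) < m^2 + n^2 := by exact_mod_cast hR
  have hq2 : (2:ℤ) ≤ m^2 + n^2 := by linarith [Int.lt_iff_add_one_le.mp hZ]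
  have hq0 : (0:ℤ) < m^2 + n^2 := by linarith
  -- division with remainder
  obtain ⟨t, c, hc_eq, hc0, hclt⟩ :
      ∃ t c : ℤ, a*m + b*n = (m^2+n^2)*t + c ∧ 0 ≤ c ∧ c < m^2+n^2 :=
    ⟨(a*m+b*n) / (m^2+n^2), (a*m+b*n) % (m^2+n^2), (Int.mul_ediv_add_emod _ _).symm,
      Int.emod_nonneg _ (by linarith), Int.emod_lt_of_pos _ hq0⟩
  have hc_ne : c ≠ 0 := by
    intro h0
    rw [h0, add_zero] at hc_eq
    have hdvd : (m^2+n^2) ∣ (a*m + b*n) := ⟨t, hc_eq⟩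
    have hn : n = a*(m^2+n^2) - m*(a*m+b*n) := by linear_combination (-n) * hab
    have hm : m = n*(a*m+b*n) - b*(m^2+n^2) := by linear_combination (-m) * hab
    have hdn : (m^2+n^2) ∣ n := by
      have h := dvd_sub (Dvd.dvd.mul_left (dvd_refl (m^2+n^2)) a) (Dvd.dvd.mul_left hdvd m)
      rwa [← hn] at h
    have hdm : (m^2+n^2) ∣ m := by
      have h := dvd_sub (Dvd.dvd.mul_left hdvd n) (Dvd.dvd.mul_left (dvd_refl (m^2+n^2)) b)
      rwa [← hm] at h
    have hu : IsUnit (m^2+n^2) := (Int.isCoprime_iff_gcd_eq_one.mpr hprim).isUnit_of_dvd' hdm hdn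
    rcases Int.isUnit_iff.mp hu with h | h <;> linarith
  have hc1 : 1 ≤ c := by omega
  have hc2 : c ≤ m^2 + n^2 - 1 := by linarith [Int.lt_iff_add_one_le.mp hclt]
  -- candidate
  set A : ℤ := a - t*m with hAdef
  set B : ℤ := b - t*n with hBdef
  have hcrA : A*n - B*m = 1 := by rw [hAdef, hBdef]; linear_combination hab
  have hdotA : A*m + B*n = c := by rw [hAdef, hBdef]; linear_combination hc_eq
  clear_value A B
  clear hAdef hBdef hc_eq
  have hcrA2 : (A*n - B*m)^2 = 1 := by rw [hcrA]; norm_num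
  have hcrB : (m - A)*n - (n - B)*m = -1 := by linear_combination -hcrA
  have hcrB2 : ((m - A)*n - (n - B)*m)^2 = 1 := by rw [hcrB]; norm_num
  have hdotB : (m - A)*m + (n - B)*n = (m^2+n^2) - c := by linear_combination -hdotA
  have hNA : A^2 + B^2 < m^2 + n^2 := norm_aux m n A B c hcrA2 hdotA hc1 hc2
  have hNB : (m - A)^2 + (n - B)^2 < m^2 + n^2 :=
    norm_aux m n (m - A) (n - B) ((m^2+n^2) - c) hcrB2 hdotB (by linarith) (by linarith)
  -- the key uniqueness step
  have key : ∀ p : (ℤ × ℤ) × (ℤ × ℤ),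
      cross p.1 (m, n) = 1 → cross (m, n) p.2 = 1 → cross p.1 p.2 = 1 →
      _root_.enorm p.1 < _root_.enorm (m, n) → _root_.enorm p.2 < _root_.enorm (m, n) →
      p = ((A, B), (m - A, n - B)) := by
    rintro ⟨⟨u, w⟩, ⟨s1, s2⟩⟩ h1 h2 h3 h4 h5
    have hv := pick_sum (m, n) (u, w) (s1, s2) h1 h2 h3
    have hs1 : s1 = m - u := by
      have := congrArg Prod.fst hv; simp at this; omega
    have hs2 : s2 = n - w := by
      have := congrArg Prod.snd hv; simp at this; omega
    have hcru : u*n - w*m = 1 := by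
      have : cross (u, w) (m, n) = 1 := h1
      simpa [cross] using this
    have hcru2 : (u*n - w*m)^2 = 1 := by rw [hcru]; norm_num
    have hNu : u^2 + w^2 < m^2 + n^2 := by
      have := (enorm_lt_iff (u, w) (m, n)).mp h4
      simpa using this
    have hNs : (m - u)^2 + (n - w)^2 < m^2 + n^2 := by
      have := (enorm_lt_iff (s1, s2) (m, n)).mp h5
      rw [hs1, hs2] at this
      simpa using this
    have hcru2' : ((m - u)*n - (n - w)*m)^2 = 1 := by
      have : (m - u)*n - (n - w)*m = -1 := by linear_combination -hcru
      rw [this]; norm_num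
    have hup : u*m + w*n ≤ m^2 + n^2 - 1 :=
      dot_aux m n u w (u*m + w*n) hcru2 rfl hNu
    have hlow : 1 ≤ u*m + w*n := by
      have := dot_aux m n (m - u) (n - w) ((m^2+n^2) - (u*m + w*n)) hcru2' (by ring) hNs
      linarith
    obtain ⟨huA, hwB⟩ := uniq_aux m n a b A B u w hab hcrA hcru
      (by rw [hdotA]; exact hc1) (by rw [hdotA]; exact hc2) hlow hup
    simp only [Prod.mk.injEq]
    refine ⟨⟨huA, hwB⟩, ?_, ?_⟩ <;> omega
  constructor
  · refine ⟨((A, B), (m - A, n - B)), ⟨?_, ?_, ?_, ?_, ?_⟩, ?_⟩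
    · show cross (A, B) (m, n) = 1
      simpa [cross] using hcrA
    · show cross (m, n) (m - A, n - B) = 1
      simp only [cross]; linear_combination hcrA
    · show cross (A, B) (m - A, n - B) = 1
      simp only [cross]; linear_combination hcrA
    · exact (enorm_lt_iff (A, B) (m, n)).mpr (by simpa using hNA)
    · exact (enorm_lt_iff (m - A, n - B) (m, n)).mpr (by simpa using hNB)
    · rintro p ⟨h1, h2, h3, h4, h5⟩
      exact key p h1 h2 h3 h4 h5
  · intro p h1 h2 h3 _ _
    exact pick_sum (m, n) p.1 p.2 h1 h2 h3
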